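/- Let H be a Hopf algebra over a field k, I = ker ε the augmentation ideal, and Q(H) = I/I². Then the map Δ_L = Δ − τ∘Δ (τ the flip) sends I into I ⊗ I and I² into I² ⊗ I + I ⊗ I², hence induces a well-defined map Ῡ : Q(H) → Q(H) ⊗ Q(H) which makes Q(H) a Lie coalgebra. -/

import Mathlib

open TensorProduct Coalgebra

variable {k : Type*} [Field k] {Q : Type*} [AddCommGroup Q] [Module k Q]

/-- The cyclic permutation `ξ(x ⊗ y ⊗ z) = z ⊗ x ⊗ y` on `Q ⊗ (Q ⊗ Q)`. -/
noncomputable def cyc : Q ⊗[k] (Q ⊗[k] Q) →ₗ[k] Q ⊗[k] (Q ⊗[k] Q) :=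
  (TensorProduct.comm k (Q ⊗[k] Q) Q).toLinearMap ∘ₗ
    (TensorProduct.assoc k Q Q Q).symm.toLinearMap

section Aux

variable {k : Type*} [Field k]

/-- Over a field, the tensor product of two injective linear maps is injective. -/
theorem tmap_inj {M N M' N' : Type*} [AddCommGroup M] [Module k M] [AddCommGroup N] [Module k N]
    [AddCommGroup M'] [Module k M'] [AddCommGroup N'] [Module k N']
    (f : M →ₗ[k] M') (g : N →ₗ[k] N') (hf : Function.Injective f)
    (hg : Function.Injective g) : Function.Injective (TensorProduct.map f g) := by
  have h1 := Module.Flat.rTensor_preserves_injective_linearMap (M := N) f hf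
  have h2 := Module.Flat.lTensor_preserves_injective_linearMap (M := M') g hg
  rw [← LinearMap.lTensor_comp_rTensor]
  exact h2.comp h1

variable {Q : Type*} [AddCommGroup Q] [Module k Q]

/-- Swap of the first two factors on `Q ⊗ (Q ⊗ Q)`. -/
noncomputable def sw : Q ⊗[k] (Q ⊗[k] Q) →ₗ[k] Q ⊗[k] (Q ⊗[k] Q) :=
  (TensorProduct.assoc k Q Q Q).toLinearMap ∘ₗ
    TensorProduct.map (TensorProduct.comm k Q Q).toLinearMap LinearMap.id ∘ₗ
    (TensorProduct.assoc k Q Q Q).symm.toLinearMap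

theorem ext3 {M : Type*} [AddCommGroup M] [Module k M]
    {f g : Q ⊗[k] (Q ⊗[k] Q) →ₗ[k] M}
    (h : ∀ x y z : Q, f (x ⊗ₜ (y ⊗ₜ z)) = g (x ⊗ₜ (y ⊗ₜ z))) : f = g := by
  apply TensorProduct.ext'
  intro x yz
  induction yz using TensorProduct.induction_on with
  | zero => simp
  | tmul y z => exact h x y z
  | add a b ha hb => simp only [tmul_add, map_add, ha, hb]

@[simp] theorem cyc_tmul (x y z : Q) :
    cyc (k := k) (x ⊗ₜ (y ⊗ₜ z)) = z ⊗ₜ (x ⊗ₜ y) := by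
  simp [cyc]

@[simp] theorem sw_tmul (x y z : Q) :
    sw (k := k) (x ⊗ₜ (y ⊗ₜ z)) = y ⊗ₜ (x ⊗ₜ z) := by
  simp [sw]

/-- The key permutation identity behind the co-Jacobi identity. -/
theorem keyperm :
    (LinearMap.id + cyc (k := k) (Q := Q) + cyc ∘ₗ cyc) ∘ₗ
      ((LinearMap.id - sw) ∘ₗ (LinearMap.id - cyc ∘ₗ cyc)) = 0 := by
  apply ext3
  intro x y z
  simp only [LinearMap.comp_apply, LinearMap.add_apply, LinearMap.sub_apply,
    LinearMap.id_apply, LinearMap.zero_apply, LinearMap.lTensor_tmul,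
    LinearEquiv.coe_coe, comm_tmul, cyc_tmul, sw_tmul, map_add, map_sub]
  abel

/-- Naturality of `cyc`. -/
theorem cyc_natural {M : Type*} [AddCommGroup M] [Module k M] (f : Q →ₗ[k] M)
    (w : Q ⊗[k] (Q ⊗[k] Q)) :
    cyc (TensorProduct.map f (TensorProduct.map f f) w) =
      TensorProduct.map f (TensorProduct.map f f) (cyc w) := by
  have : cyc (k := k) (Q := M) ∘ₗ TensorProduct.map f (TensorProduct.map f f) =
      TensorProduct.map f (TensorProduct.map f f) ∘ₗ cyc := by
    apply ext3; intro x y z; simp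
  exact DFunLike.congr_fun this w

end Aux

set_option maxHeartbeats 4000000

/-- Let `H` be a Hopf algebra over a field `k`, `I = ker ε` the augmentation ideal
and `Q(H) = I/I²` the indecomposables.  Then `Δ_L = Δ − τ∘Δ` sends `I` into
`I ⊗ I` and `I²` into `I² ⊗ I + I ⊗ I²`, hence induces a well-defined map
`Ῡ : Q(H) → Q(H) ⊗ Q(H)` which makes `Q(H)` a Lie coalgebra (antisymmetric and
satisfying the co-Jacobi identity). -/
theorem stmt15 {H : Type*} [Ring H] [HopfAlgebra k H] :
    letI I : Submodule k H := LinearMap.ker (counit (R := k) (A := H))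
    letI I2 : Submodule k H := I * I
    letI D : H →ₗ[k] H ⊗[k] H :=
      comul - (TensorProduct.comm k H H).toLinearMap ∘ₗ comul
    letI QH := ↥I ⧸ Submodule.comap I.subtype I2
    letI π : ↥I →ₗ[k] QH := (Submodule.comap I.subtype I2).mkQ
    -- `Δ_L` sends `I` into `I ⊗ I`:
    (∀ x ∈ I, D x ∈ LinearMap.range (TensorProduct.map I.subtype I.subtype)) ∧
    -- `Δ_L` sends `I²` into `I² ⊗ I + I ⊗ I²`:
    (∀ x ∈ I2, D x ∈ LinearMap.range (TensorProduct.map I2.subtype I.subtype)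
      ⊔ LinearMap.range (TensorProduct.map I.subtype I2.subtype)) ∧
    -- hence there is a well-defined induced map `Ῡ`, making `Q(H)` a Lie coalgebra:
    (∃ Υ : QH →ₗ[k] QH ⊗[k] QH,
      (∀ (x : ↥I) (y : ↥I ⊗[k] ↥I),
        TensorProduct.map I.subtype I.subtype y = D x.1 →
          Υ (π x) = TensorProduct.map π π y) ∧
      ((TensorProduct.comm k QH QH).toLinearMap ∘ₗ Υ = -Υ) ∧
      ((LinearMap.id + cyc (k := k) (Q := QH) + cyc ∘ₗ cyc) ∘ₗ
        (TensorProduct.assoc k QH QH QH).toLinearMap ∘ₗ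
          TensorProduct.map Υ LinearMap.id ∘ₗ Υ = 0)) := by
  set I : Submodule k H := LinearMap.ker (counit (R := k) (A := H)) with hI
  set I2 : Submodule k H := I * I with hI2
  set ι : ↥I →ₗ[k] H := I.subtype with hι
  set ι2 : ↥I2 →ₗ[k] H := I2.subtype with hι2
  set cH : H ⊗[k] H →ₗ[k] H ⊗[k] H := (TensorProduct.comm k H H).toLinearMap with hcH
  set D : H →ₗ[k] H ⊗[k] H := comul - cH ∘ₗ comul with hD
  set π : ↥I →ₗ[k] (↥I ⧸ Submodule.comap ι I2) :=
    (Submodule.comap ι I2).mkQ with hπ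
  have hmemI : ∀ x : H, x ∈ I ↔ counit (R := k) x = 0 := by
    intro x; rw [hI]; exact LinearMap.mem_ker
  -- comm ∘ comm = id pointwise
  have hcc : ∀ z : H ⊗[k] H, cH (cH z) = z := by
    intro z
    induction z using TensorProduct.induction_on with
    | zero => simp
    | tmul a b => simp [hcH]
    | add a b ha hb => simp only [map_add, ha, hb]
  have hcH_tmul : ∀ a b : H, cH (a ⊗ₜ[k] b) = b ⊗ₜ[k] a := by
    intro a b; simp [hcH]
  -- the projection p onto I
  set p : H →ₗ[k] H :=
    LinearMap.id - Algebra.linearMap k H ∘ₗ (counit (R := k) (A := H)) with hp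
  have hp_apply : ∀ x : H, p x = x - algebraMap k H (counit (R := k) x) := by
    intro x; simp [hp]
  have hp_mem : ∀ x : H, p x ∈ I := by
    intro x
    rw [hmemI, hp_apply, map_sub, Bialgebra.counit_algebraMap, sub_self]
  have hp_fix : ∀ x ∈ I, p x = x := by
    intro x hx
    rw [hp_apply, (hmemI x).1 hx, map_zero, sub_zero]
  set p' : H →ₗ[k] ↥I := LinearMap.codRestrict I p hp_mem with hp'
  have hιp' : ι ∘ₗ p' = p := by
    rw [hι]; exact LinearMap.subtype_comp_codRestrict _ _ _
  -- the fundamental computation : (p ⊗ p) ∘ Δ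
  have hppΔ : ∀ x : H,
      TensorProduct.map p p (comul (R := k) x) = comul (R := k) x - x ⊗ₜ 1 - 1 ⊗ₜ p x := by
    intro x
    have h1 : TensorProduct.map p p = LinearMap.lTensor H p ∘ₗ LinearMap.rTensor H p :=
      (LinearMap.lTensor_comp_rTensor (M := H) p p).symm
    have hrq : LinearMap.rTensor H (Algebra.linearMap k H ∘ₗ counit (R := k) (A := H))
        (comul (R := k) x) = (1 : H) ⊗ₜ x := by
      rw [LinearMap.rTensor_comp, LinearMap.comp_apply, rTensor_counit_comul]
      simp
    have hlq : LinearMap.lTensor H (Algebra.linearMap k H ∘ₗ counit (R := k) (A := H))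
        (comul (R := k) x) = x ⊗ₜ (1 : H) := by
      rw [LinearMap.lTensor_comp, LinearMap.comp_apply, lTensor_counit_comul]
      simp
    have hrp : LinearMap.rTensor H p (comul (R := k) x)
        = comul (R := k) x - (1 : H) ⊗ₜ[k] x := by
      rw [hp, LinearMap.rTensor_sub, LinearMap.sub_apply, LinearMap.rTensor_id,
        LinearMap.id_apply, hrq]
    have hlp1 : LinearMap.lTensor H p (comul (R := k) x)
        = comul (R := k) x - x ⊗ₜ[k] (1 : H) := by
      rw [hp, LinearMap.lTensor_sub, LinearMap.sub_apply, LinearMap.lTensor_id,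
        LinearMap.id_apply, hlq]
    have hlp2 : LinearMap.lTensor H p ((1 : H) ⊗ₜ[k] x) = (1 : H) ⊗ₜ[k] p x :=
      LinearMap.lTensor_tmul _ _ _ _
    rw [h1, LinearMap.comp_apply, hrp, map_sub, hlp1, hlp2]
  -- decomposition of Δ x for x ∈ I
  have hΔdec : ∀ x ∈ I, comul (R := k) x =
      x ⊗ₜ 1 + 1 ⊗ₜ x + TensorProduct.map p p (comul (R := k) x) := by
    intro x hx
    rw [hppΔ x, hp_fix x hx]
    abel
  -- (p⊗p) range lands in range (ι ⊗ ι)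
  have hppcomp : TensorProduct.map ι ι ∘ₗ TensorProduct.map p' p' = TensorProduct.map p p := by
    rw [← TensorProduct.map_comp, hιp']
  have hpp_range : ∀ z : H ⊗[k] H,
      TensorProduct.map p p z ∈ LinearMap.range (TensorProduct.map ι ι) := by
    intro z
    exact ⟨TensorProduct.map p' p' z, congr($(hppcomp) z)⟩
  -- range (ι ⊗ ι) is comm-stable
  have hcomm_range : ∀ z ∈ LinearMap.range (TensorProduct.map ι ι),
      cH z ∈ LinearMap.range (TensorProduct.map ι ι) := by
    rintro _ ⟨w, rfl⟩
    exact ⟨(TensorProduct.comm k ↥I ↥I) w, TensorProduct.map_comm ι ι w⟩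
  -- D in terms of Δ
  have hD_apply : ∀ x : H, D x = comul (R := k) x - cH (comul (R := k) x) := by
    intro x
    rw [hD, LinearMap.sub_apply, LinearMap.comp_apply, hcH]
  -- Part 1
  have part1 : ∀ x ∈ I, D x ∈ LinearMap.range (TensorProduct.map ι ι) := by
    intro x hx
    have hu := hpp_range (comul (R := k) x)
    set u : H ⊗[k] H := TensorProduct.map p p (comul (R := k) x) with hu_def
    have hDu : D x = u - cH u := by
      rw [hD_apply, hΔdec x hx, ← hu_def, map_add, map_add, hcH_tmul, hcH_tmul]
      abel
    rw [hDu]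
    exact sub_mem hu (hcomm_range u hu)
  -- I² ≤ I
  have hImul : ∀ a ∈ I, ∀ b ∈ I, a * b ∈ I := by
    intro a ha b hb
    rw [hmemI] at *
    rw [Bialgebra.counit_mul, ha, hb, mul_zero]
  have hle : I2 ≤ I := Submodule.mul_le.2 hImul
  -- The target submodule S for part 2
  set S : Submodule k (H ⊗[k] H) :=
    LinearMap.range (TensorProduct.map ι2 ι) ⊔ LinearMap.range (TensorProduct.map ι ι2)
    with hS
  -- S is comm-stable
  have hScomm : ∀ z ∈ S, cH z ∈ S := by
    intro z hz
    rw [hS, Submodule.mem_sup] at hz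
    obtain ⟨a, ⟨a', rfl⟩, b, ⟨b', rfl⟩, rfl⟩ := hz
    rw [map_add]
    refine add_mem ?_ ?_
    · exact Submodule.mem_sup_right ⟨TensorProduct.comm k _ _ a',
        TensorProduct.map_comm ι ι2 a'⟩
    · exact Submodule.mem_sup_left ⟨TensorProduct.comm k _ _ b',
        TensorProduct.map_comm ι2 ι b'⟩
  -- multiplication lemmas
  have hmul_xv : ∀ x ∈ I, ∀ v ∈ LinearMap.range (TensorProduct.map ι ι),
      (x ⊗ₜ (1 : H)) * v ∈ LinearMap.range (TensorProduct.map ι2 ι) := by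
    rintro x hx _ ⟨w, rfl⟩
    induction w using TensorProduct.induction_on with
    | zero => simp only [map_zero, mul_zero]; exact zero_mem _
    | tmul c d =>
      refine ⟨(⟨(x : H) * (c : H), Submodule.mul_mem_mul hx c.2⟩ : ↥I2) ⊗ₜ d, ?_⟩
      simp [hι, hι2, Algebra.TensorProduct.tmul_mul_tmul]
    | add a b ha hb =>
      rw [map_add, mul_add]; exact add_mem ha hb
  have hmul_1xv : ∀ x ∈ I, ∀ v ∈ LinearMap.range (TensorProduct.map ι ι),
      ((1 : H) ⊗ₜ x) * v ∈ LinearMap.range (TensorProduct.map ι ι2) := by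
    rintro x hx _ ⟨w, rfl⟩
    induction w using TensorProduct.induction_on with
    | zero => simp only [map_zero, mul_zero]; exact zero_mem _
    | tmul c d =>
      refine ⟨c ⊗ₜ (⟨x * (d : H), Submodule.mul_mem_mul hx d.2⟩ : ↥I2), ?_⟩
      simp [hι, hι2, Algebra.TensorProduct.tmul_mul_tmul]
    | add a b ha hb =>
      rw [map_add, mul_add]; exact add_mem ha hb
  have hmul_vy : ∀ y ∈ I, ∀ v ∈ LinearMap.range (TensorProduct.map ι ι),
      v * (y ⊗ₜ (1 : H)) ∈ LinearMap.range (TensorProduct.map ι2 ι) := by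
    rintro y hy _ ⟨w, rfl⟩
    induction w using TensorProduct.induction_on with
    | zero => simp only [map_zero, zero_mul]; exact zero_mem _
    | tmul c d =>
      refine ⟨(⟨(c : H) * y, Submodule.mul_mem_mul c.2 hy⟩ : ↥I2) ⊗ₜ d, ?_⟩
      simp [hι, hι2, Algebra.TensorProduct.tmul_mul_tmul]
    | add a b ha hb =>
      rw [map_add, add_mul]; exact add_mem ha hb
  have hmul_v1y : ∀ y ∈ I, ∀ v ∈ LinearMap.range (TensorProduct.map ι ι),
      v * ((1 : H) ⊗ₜ y) ∈ LinearMap.range (TensorProduct.map ι ι2) := by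
    rintro y hy _ ⟨w, rfl⟩
    induction w using TensorProduct.induction_on with
    | zero => simp only [map_zero, zero_mul]; exact zero_mem _
    | tmul c d =>
      refine ⟨c ⊗ₜ (⟨(d : H) * y, Submodule.mul_mem_mul d.2 hy⟩ : ↥I2), ?_⟩
      simp [hι, hι2, Algebra.TensorProduct.tmul_mul_tmul]
    | add a b ha hb =>
      rw [map_add, add_mul]; exact add_mem ha hb
  have hmul_uv : ∀ u ∈ LinearMap.range (TensorProduct.map ι ι),
      ∀ v ∈ LinearMap.range (TensorProduct.map ι ι),
      u * v ∈ LinearMap.range (TensorProduct.map ι2 ι) := by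
    rintro _ ⟨w, rfl⟩ v hv
    induction w using TensorProduct.induction_on with
    | zero => simp only [map_zero, zero_mul]; exact zero_mem _
    | tmul c d =>
      obtain ⟨w2, rfl⟩ := hv
      induction w2 using TensorProduct.induction_on with
      | zero => simp only [map_zero, mul_zero]; exact zero_mem _
      | tmul e f =>
        refine ⟨(⟨(c : H) * (e : H), Submodule.mul_mem_mul c.2 e.2⟩ : ↥I2) ⊗ₜ
          (⟨(d : H) * (f : H), hImul _ d.2 _ f.2⟩ : ↥I), ?_⟩
        simp [hι, hι2, Algebra.TensorProduct.tmul_mul_tmul]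
      | add a b ha hb =>
        rw [map_add, mul_add]; exact add_mem ha hb
    | add a b ha hb =>
      rw [map_add, add_mul]
      exact add_mem ha hb
  -- Part 2
  have part2 : ∀ x ∈ I2, D x ∈ S := by
    intro x hx
    refine Submodule.mul_induction_on hx ?_ ?_
    · intro a ha b hb
      have hua := hpp_range (comul (R := k) a)
      have hub := hpp_range (comul (R := k) b)
      set u : H ⊗[k] H := TensorProduct.map p p (comul (R := k) a) with hu_def
      set v : H ⊗[k] H := TensorProduct.map p p (comul (R := k) b) with hv_def
      set s : H ⊗[k] H := (a ⊗ₜ (1:H)) * v + ((1:H) ⊗ₜ a) * v + u * (b ⊗ₜ (1:H))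
        + u * ((1:H) ⊗ₜ b) + u * v with hs_def
      have hsS : s ∈ S := by
        refine add_mem (add_mem (add_mem (add_mem ?_ ?_) ?_) ?_) ?_
        · exact Submodule.mem_sup_left (hmul_xv a ha v hub)
        · exact Submodule.mem_sup_right (hmul_1xv a ha v hub)
        · exact Submodule.mem_sup_left (hmul_vy b hb u hua)
        · exact Submodule.mem_sup_right (hmul_v1y b hb u hua)
        · exact Submodule.mem_sup_left (hmul_uv u hua v hub)
      have hΔab : comul (R := k) (a * b) =
          ((a * b) ⊗ₜ (1:H) + a ⊗ₜ b + b ⊗ₜ a + (1:H) ⊗ₜ (a * b)) + s := by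
        rw [Bialgebra.comul_mul, hΔdec a ha, hΔdec b hb, ← hu_def, ← hv_def, hs_def]
        simp only [add_mul, mul_add, Algebra.TensorProduct.tmul_mul_tmul,
          one_mul, mul_one]
        abel
      have hDab : D (a * b) = s - cH s := by
        rw [hD_apply, hΔab]
        simp only [map_add, hcH_tmul]
        abel
      rw [hDab]
      exact sub_mem hsS (hScomm s hsS)
    · intro a b ha hb
      rw [map_add]
      exact add_mem ha hb
  -- injectivity facts
  have hinj2 : Function.Injective (TensorProduct.map ι ι) :=
    tmap_inj ι ι I.injective_subtype I.injective_subtype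
  have hinj3 : Function.Injective (TensorProduct.map ι (TensorProduct.map ι ι)) :=
    by
      have h := tmap_inj (k := k) (N := ↥I ⊗[k] ↥I) ι (TensorProduct.map ι ι)
        I.injective_subtype hinj2
      exact h
  -- the lift of D to I ⊗ I
  set e : (↥I ⊗[k] ↥I) ≃ₗ[k] LinearMap.range (TensorProduct.map ι ι) :=
    LinearEquiv.ofInjective (TensorProduct.map ι ι) hinj2 with he
  set Dres : ↥I →ₗ[k] LinearMap.range (TensorProduct.map ι ι) :=
    LinearMap.codRestrict _ (D ∘ₗ ι) (fun x => part1 _ x.2) with hDres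
  set Dt : ↥I →ₗ[k] ↥I ⊗[k] ↥I := e.symm.toLinearMap ∘ₗ Dres with hDt
  have hDtil : ∀ x : ↥I, TensorProduct.map ι ι (Dt x) = D (x : H) := by
    intro x
    have : TensorProduct.map ι ι (Dt x) = (e (e.symm (Dres x)) : H ⊗[k] H) := by
      rw [hDt]
      simp only [LinearMap.comp_apply, LinearEquiv.coe_coe]
      rw [he]
      exact (LinearEquiv.ofInjective_apply _ _).symm
    rw [this, e.apply_symm_apply]
    rfl
  set j : ↥I2 →ₗ[k] ↥I := Submodule.inclusion hle with hj
  have hιj : ι ∘ₗ j = ι2 := by ext c; rfl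
  have hπj : π ∘ₗ j = 0 := by
    ext c
    simp only [LinearMap.comp_apply, LinearMap.zero_apply, hj]
    rw [hπ, Submodule.mkQ_apply, Submodule.Quotient.mk_eq_zero]
    exact c.2
  have hcomp_jl : TensorProduct.map ι ι ∘ₗ TensorProduct.map j LinearMap.id
      = TensorProduct.map ι2 ι := by
    rw [← TensorProduct.map_comp, hιj, LinearMap.comp_id]
  have hcomp_jr : TensorProduct.map ι ι ∘ₗ TensorProduct.map LinearMap.id j
      = TensorProduct.map ι ι2 := by
    rw [← TensorProduct.map_comp, hιj, LinearMap.comp_id]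
  -- kernel condition
  have hker : ∀ x : ↥I, (x : H) ∈ I2 → TensorProduct.map π π (Dt x) = 0 := by
    intro x hx
    have h2 := part2 _ hx
    rw [hS, Submodule.mem_sup] at h2
    obtain ⟨_, ⟨a, rfl⟩, _, ⟨b, rfl⟩, hab⟩ := h2
    have hja : TensorProduct.map ι ι (TensorProduct.map j LinearMap.id a)
        = TensorProduct.map ι2 ι a := congr($(hcomp_jl) a)
    have hjb : TensorProduct.map ι ι (TensorProduct.map LinearMap.id j b)
        = TensorProduct.map ι ι2 b := congr($(hcomp_jr) b)
    have hDtx : Dt x = TensorProduct.map j LinearMap.id a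
        + TensorProduct.map LinearMap.id j b := by
      apply hinj2
      rw [hDtil, map_add, hja, hjb, hab]
    have hπjl : TensorProduct.map π π ∘ₗ TensorProduct.map j LinearMap.id
        = TensorProduct.map (0 : ↥I2 →ₗ[k] (↥I ⧸ Submodule.comap ι I2)) π := by
      rw [← TensorProduct.map_comp, hπj, LinearMap.comp_id]
    have hπjr : TensorProduct.map π π ∘ₗ TensorProduct.map LinearMap.id j
        = TensorProduct.map π (0 : ↥I2 →ₗ[k] (↥I ⧸ Submodule.comap ι I2)) := by
      rw [← TensorProduct.map_comp, hπj, LinearMap.comp_id]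
    have hga : TensorProduct.map π π (TensorProduct.map j LinearMap.id a)
        = TensorProduct.map (0 : ↥I2 →ₗ[k] (↥I ⧸ Submodule.comap ι I2)) π a :=
      congr($(hπjl) a)
    have hgb : TensorProduct.map π π (TensorProduct.map LinearMap.id j b)
        = TensorProduct.map π (0 : ↥I2 →ₗ[k] (↥I ⧸ Submodule.comap ι I2)) b :=
      congr($(hπjr) b)
    rw [hDtx, map_add, hga, hgb,
      TensorProduct.map_zero_left, TensorProduct.map_zero_right]
    simp
  -- the induced map Υ
  set Υ :=
    (Submodule.comap ι I2).liftQ (TensorProduct.map π π ∘ₗ Dt)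
      (fun x hx => hker x hx) with hΥ
  have hΥπ : ∀ x : ↥I, Υ (π x) = TensorProduct.map π π (Dt x) := by
    intro x
    rw [hΥ]
    exact Submodule.liftQ_apply _ _ _
  refine ⟨fun x hx => part1 x hx, fun x hx => part2 x hx, Υ, ?_, ?_, ?_⟩
  -- property (i) : Υ is induced by D
  · intro x y hy
    have : y = Dt x := hinj2 (by rw [hy, hDtil])
    rw [this, hΥπ]
  -- property (ii) : antisymmetry
  · apply Submodule.linearMap_qext
    refine LinearMap.ext fun x => ?_
    have hx1 : Υ (π x) = TensorProduct.map π π (Dt x) := hΥπ x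
    have hDx : cH (D (x : H)) = - D (x : H) := by
      rw [hD_apply, map_sub, hcc]
      abel
    have hDtx : TensorProduct.comm k ↥I ↥I (Dt x) = - Dt x := by
      apply hinj2
      rw [show TensorProduct.map ι ι (-Dt x) = -TensorProduct.map ι ι (Dt x) from map_neg (TensorProduct.map ι ι) (Dt x),
        hDtil, ← hDx, ← hDtil]
      exact TensorProduct.map_comm ι ι (Dt x)
    show (TensorProduct.comm k _ _).toLinearMap (Υ (π x)) = - (Υ (π x))
    simp only [LinearEquiv.coe_coe]
    rw [hx1, ← TensorProduct.map_comm, hDtx]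
    exact map_neg (TensorProduct.map π π) (Dt x)
  -- property (iii) : co-Jacobi
  · -- Step A : the co-Jacobi identity holds for D on H itself
    have hJH : ∀ x : H,
        (LinearMap.id + cyc (k := k) (Q := H) + cyc ∘ₗ cyc :
            H ⊗[k] (H ⊗[k] H) →ₗ[k] H ⊗[k] (H ⊗[k] H))
          ((TensorProduct.assoc k H H H)
            (TensorProduct.map D LinearMap.id (D x))) = 0 := by
      intro x
      set A := (TensorProduct.assoc k H H H).toLinearMap with hA
      set cH2 := (TensorProduct.comm k H (H ⊗[k] H)).toLinearMap with hcH2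
      set t : H ⊗[k] (H ⊗[k] H) :=
        LinearMap.lTensor H (comul (R := k) (A := H)) (comul (R := k) x) with ht
      -- naturality identities
      have e1 : A ∘ₗ TensorProduct.map cH LinearMap.id = sw ∘ₗ A := by
        apply TensorProduct.ext_threefold
        intro a b c
        simp [hA, hcH]
      have e2 : A ∘ₗ cH2 = cyc ∘ₗ cyc := by
        apply ext3
        intro a b c
        simp [hA, hcH2]
      have e3 : TensorProduct.map (comul (R := k) (A := H)) LinearMap.id ∘ₗ cH
          = cH2 ∘ₗ LinearMap.lTensor H (comul (R := k) (A := H)) := by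
        apply TensorProduct.ext'
        intro a b
        simp [hcH, hcH2]
      -- coassociativity
      have hco : A (LinearMap.rTensor H (comul (R := k) (A := H)) (comul (R := k) x))
          = t := by
        rw [ht]
        exact Coalgebra.coassoc_apply x
      have hrTmap : LinearMap.rTensor H (comul (R := k) (A := H))
          = TensorProduct.map (comul (R := k) (A := H)) LinearMap.id := rfl
      -- β₁ : rTensor Δ (cH (Δ x)) = cH2 t
      have hβ1 : TensorProduct.map (comul (R := k) (A := H)) LinearMap.id
          (cH (comul (R := k) x)) = cH2 t := by
        have := congr($(e3) (comul (R := k) x))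
        simpa only [LinearMap.comp_apply, ht] using this
      have hβ2 : A (cH2 t) = cyc (cyc t) := by
        have := congr($(e2) t)
        simpa only [LinearMap.comp_apply] using this
      have hα2 : ∀ u : (H ⊗[k] H) ⊗[k] H,
          A (TensorProduct.map cH LinearMap.id u) = sw (A u) := by
        intro u
        have := congr($(e1) u)
        simpa only [LinearMap.comp_apply] using this
      have hrD : LinearMap.rTensor H D
          = LinearMap.rTensor H (comul (R := k) (A := H))
          - TensorProduct.map cH (LinearMap.id : H →ₗ[k] H) ∘ₗ
            LinearMap.rTensor H (comul (R := k) (A := H)) := by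
        rw [hD, LinearMap.rTensor_sub, LinearMap.rTensor_comp]
        rfl
      have hkey : A (TensorProduct.map D LinearMap.id (D x)) =
          ((LinearMap.id - sw) ∘ₗ (LinearMap.id - cyc ∘ₗ cyc)) t := by
        rw [hD_apply,
          show TensorProduct.map D (LinearMap.id : H →ₗ[k] H)
            = LinearMap.rTensor H D from rfl, hrD]
        simp only [LinearMap.sub_apply, LinearMap.comp_apply, map_sub]
        rw [hα2, hα2, hco, hrTmap, hβ1, hβ2]
        simp only [LinearMap.sub_apply, LinearMap.comp_apply, LinearMap.id_apply,
          map_sub]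
      rw [show (TensorProduct.assoc k H H H)
          (TensorProduct.map D LinearMap.id (D x))
          = A (TensorProduct.map D LinearMap.id (D x)) from rfl, hkey]
      have := congr($(keyperm (k := k) (Q := H)) t)
      simpa only [LinearMap.comp_apply, LinearMap.zero_apply] using this
    -- transfer the identity to I
    have hDtilcomp : TensorProduct.map ι ι ∘ₗ Dt = D ∘ₗ ι :=
      LinearMap.ext fun x => hDtil x
    have hJI : ∀ x : ↥I,
        (LinearMap.id + cyc (k := k) (Q := ↥I) + cyc ∘ₗ cyc :
            ↥I ⊗[k] (↥I ⊗[k] ↥I) →ₗ[k] ↥I ⊗[k] (↥I ⊗[k] ↥I))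
          ((TensorProduct.assoc k ↥I ↥I ↥I)
            (TensorProduct.map Dt LinearMap.id (Dt x))) = 0 := by
      intro x
      apply hinj3
      rw [map_zero]
      set w := (TensorProduct.assoc k ↥I ↥I ↥I)
        (TensorProduct.map Dt LinearMap.id (Dt x)) with hw
      have hpush : TensorProduct.map ι (TensorProduct.map ι ι)
          ((LinearMap.id + cyc + cyc ∘ₗ cyc :
            ↥I ⊗[k] (↥I ⊗[k] ↥I) →ₗ[k] ↥I ⊗[k] (↥I ⊗[k] ↥I)) w)
          = (LinearMap.id + cyc (k := k) (Q := H) + cyc ∘ₗ cyc :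
            H ⊗[k] (H ⊗[k] H) →ₗ[k] H ⊗[k] (H ⊗[k] H))
            (TensorProduct.map ι (TensorProduct.map ι ι) w) := by
        simp only [LinearMap.add_apply, LinearMap.id_apply, LinearMap.comp_apply,
          map_add]
        simp only [← cyc_natural]
      have hcompmaps : TensorProduct.map (TensorProduct.map ι ι) ι ∘ₗ
          TensorProduct.map Dt LinearMap.id
          = TensorProduct.map D LinearMap.id ∘ₗ TensorProduct.map ι ι := by
        rw [← TensorProduct.map_comp, ← TensorProduct.map_comp, hDtilcomp,
          LinearMap.comp_id, LinearMap.id_comp]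
      have hw2 : TensorProduct.map ι (TensorProduct.map ι ι) w
          = (TensorProduct.assoc k H H H)
            (TensorProduct.map D LinearMap.id (D (x : H))) := by
        rw [hw, TensorProduct.map_map_assoc]
        congr 1
        have := congr($(hcompmaps) (Dt x))
        simp only [LinearMap.comp_apply] at this
        rw [this, hDtil]
      rw [hpush, hw2]
      exact hJH (x : H)
    -- final assembly
    have hΥcomp : Υ ∘ₗ π = TensorProduct.map π π ∘ₗ Dt :=
      LinearMap.ext fun x => hΥπ x
    apply Submodule.linearMap_qext
    ext x
    simp only [LinearMap.comp_apply, Submodule.mkQ_apply, LinearMap.zero_apply,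
      LinearMap.zero_comp, LinearEquiv.coe_coe]
    have hc : TensorProduct.map Υ LinearMap.id ∘ₗ TensorProduct.map π π
        = TensorProduct.map (TensorProduct.map π π) π ∘ₗ
          TensorProduct.map Dt LinearMap.id := by
      rw [← TensorProduct.map_comp, ← TensorProduct.map_comp, hΥcomp,
        LinearMap.comp_id, LinearMap.id_comp]
    have h1 : Υ (Submodule.Quotient.mk x)
        = TensorProduct.map π π (Dt x) := hΥπ x
    rw [h1]
    have h2 := congr($(hc) (Dt x))
    simp only [LinearMap.comp_apply] at h2
    rw [h2, ← TensorProduct.map_map_assoc]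
    set QH' := ↥I ⧸ Submodule.comap ι I2 with hQH'
    have hpushπ : ∀ u : ↥I ⊗[k] (↥I ⊗[k] ↥I),
        (LinearMap.id + cyc (k := k) (Q := QH') + cyc ∘ₗ cyc :
            QH' ⊗[k] (QH' ⊗[k] QH') →ₗ[k] QH' ⊗[k] (QH' ⊗[k] QH'))
          (TensorProduct.map π (TensorProduct.map π π) u)
        = TensorProduct.map π (TensorProduct.map π π)
            ((LinearMap.id + cyc + cyc ∘ₗ cyc :
            ↥I ⊗[k] (↥I ⊗[k] ↥I) →ₗ[k] ↥I ⊗[k] (↥I ⊗[k] ↥I)) u) := by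
      intro u
      simp only [LinearMap.add_apply, LinearMap.id_apply, LinearMap.comp_apply,
        map_add]
      simp only [cyc_natural]
    rw [hpushπ, hJI, map_zero]
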